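/- Let Φ : 𝔸³ → 𝔸³ be the morphism defined by Φ(x, y, z) = (yz, xz, z+1), let c = (0, 1, 1), and let f : 𝔸³ → 𝔸¹ be given by f(x, y, z) = x + 1. Then f(Φ^{2n}(c)) = 1 and f(Φ^{2n+1}(c)) = (2n+1)! + 1 for every n ≥ 0, and consequently liminf_{n→∞} h(f(Φ^n(c)))/log(n) = 0 while limsup_{n→∞} h(f(Φ^n(c)))/log(n) = ∞. -/

import Mathlib

open NumberField Filter
open scoped IntermediateField

/-- The denominator ideal of an element `α` of a number field `K`. -/
noncomputable def denIdeal (K : Type*) [Field K] [NumberField K] (α : K) :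
    Ideal (𝓞 K) where
  carrier := {x | ∃ y : 𝓞 K, (algebraMap (𝓞 K) K y) = (algebraMap (𝓞 K) K x) * α}
  add_mem' := by
    rintro a b ⟨ya, ha⟩ ⟨yb, hb⟩
    exact ⟨ya + yb, by rw [map_add, map_add, ha, hb]; ring⟩
  zero_mem' := ⟨0, by simp⟩
  smul_mem' := by
    rintro c x ⟨y, hy⟩
    exact ⟨c * y, by rw [smul_eq_mul, map_mul, map_mul, hy]; ring⟩

/-- The absolute logarithmic Weil height of an element of a number field. -/
noncomputable def weilHeight (K : Type*) [Field K] [NumberField K] (α : K) : ℝ :=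
  (Module.finrank ℚ K : ℝ)⁻¹ *
    ((∑ w : InfinitePlace K, (w.mult : ℝ) * Real.log (max (w α) 1)) +
      Real.log (Ideal.absNorm (denIdeal K α)))

/-- The absolute logarithmic Weil height of an algebraic number, computed in
the number field `ℚ(α)`. -/
noncomputable def absHeight (α : AlgebraicClosure ℚ) : ℝ :=
  letI : FiniteDimensional ℚ ℚ⟮α⟯ :=
    IntermediateField.adjoin.finiteDimensional
      ((AlgebraicClosure.isAlgebraic ℚ).isAlgebraic α).isIntegral
  letI : NumberField ℚ⟮α⟯ := ⟨⟩
  weilHeight ℚ⟮α⟯ (IntermediateField.AdjoinSimple.gen ℚ α)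

lemma log_nat_nonneg (n : ℕ) : 0 ≤ Real.log n := by
  rcases Nat.eq_zero_or_pos n with h | h
  · simp [h]
  · exact Real.log_nonneg (by exact_mod_cast h)

lemma weilHeight_nonneg (K : Type*) [Field K] [NumberField K] (α : K) :
    0 ≤ weilHeight K α := by
  unfold weilHeight
  apply mul_nonneg (by positivity)
  apply add_nonneg
  · exact Finset.sum_nonneg fun w _ => mul_nonneg (by positivity)
      (Real.log_nonneg (le_max_right _ _))
  · exact log_nat_nonneg _

lemma infinitePlace_natCast {K : Type*} [Field K] [NumberField K]
    (w : InfinitePlace K) (m : ℕ) : w (m : K) = m := by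
  rw [← InfinitePlace.norm_embedding_eq, map_natCast]
  simp

lemma weilHeight_one (K : Type*) [Field K] [NumberField K] :
    weilHeight K (1 : K) = 0 := by
  have hden : denIdeal K (1 : K) = ⊤ := by
    rw [Ideal.eq_top_iff_one]
    exact ⟨1, by simp⟩
  unfold weilHeight
  rw [hden, Ideal.absNorm_top]
  have : ∀ w : InfinitePlace K, (w.mult : ℝ) * Real.log (max (w (1:K)) 1) = 0 := by
    intro w
    rw [map_one]
    simp
  rw [Finset.sum_congr rfl fun w _ => this w]
  simp

lemma weilHeight_natCast_le (K : Type*) [Field K] [NumberField K] (m : ℕ) (hm : 1 ≤ m) :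
    Real.log m ≤ weilHeight K (m : K) := by
  have hd : (0 : ℝ) < (Module.finrank ℚ K : ℝ) := by
    exact_mod_cast Module.finrank_pos
  have hsum : (∑ w : InfinitePlace K, (w.mult : ℝ) * Real.log (max (w (m : K)) 1))
      = (Module.finrank ℚ K : ℝ) * Real.log m := by
    have : ∀ w : InfinitePlace K, (w.mult : ℝ) * Real.log (max (w (m : K)) 1)
        = (w.mult : ℝ) * Real.log m := by
      intro w
      rw [infinitePlace_natCast, max_eq_left (by exact_mod_cast hm)]
    rw [Finset.sum_congr rfl fun w _ => this w, ← Finset.sum_mul]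
    congr 1
    rw [← Nat.cast_sum, InfinitePlace.sum_mult_eq]
  unfold weilHeight
  rw [hsum]
  have hL : 0 ≤ Real.log (Ideal.absNorm (denIdeal K ((m : ℕ) : K))) := log_nat_nonneg _
  have key : (Module.finrank ℚ K : ℝ)⁻¹ * ((Module.finrank ℚ K : ℝ) * Real.log m)
      = Real.log m := by field_simp
  nlinarith [mul_nonneg (inv_nonneg.2 hd.le) hL]

lemma absHeight_nonneg (α : AlgebraicClosure ℚ) : 0 ≤ absHeight α := by
  unfold absHeight
  letI : FiniteDimensional ℚ ℚ⟮α⟯ :=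
    IntermediateField.adjoin.finiteDimensional
      ((AlgebraicClosure.isAlgebraic ℚ).isAlgebraic α).isIntegral
  letI : NumberField ℚ⟮α⟯ := ⟨⟩
  exact weilHeight_nonneg _ _

lemma absHeight_one : absHeight 1 = 0 := by
  unfold absHeight
  have h : IntermediateField.AdjoinSimple.gen ℚ (1 : AlgebraicClosure ℚ) = 1 :=
    Subtype.ext (by simp [IntermediateField.AdjoinSimple.coe_gen])
  letI : FiniteDimensional ℚ ℚ⟮(1 : AlgebraicClosure ℚ)⟯ :=
    IntermediateField.adjoin.finiteDimensional
      ((AlgebraicClosure.isAlgebraic ℚ).isAlgebraic (1 : AlgebraicClosure ℚ)).isIntegral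
  letI : NumberField ℚ⟮(1 : AlgebraicClosure ℚ)⟯ := ⟨⟩
  rw [h]
  exact weilHeight_one _

lemma absHeight_natCast_le (m : ℕ) (hm : 1 ≤ m) :
    Real.log m ≤ absHeight ((m : ℕ) : AlgebraicClosure ℚ) := by
  unfold absHeight
  have h : IntermediateField.AdjoinSimple.gen ℚ ((m : ℕ) : AlgebraicClosure ℚ)
      = ((m : ℕ) : ℚ⟮((m : ℕ) : AlgebraicClosure ℚ)⟯) :=
    Subtype.ext (by simp [IntermediateField.AdjoinSimple.coe_gen])
  letI : FiniteDimensional ℚ ℚ⟮((m : ℕ) : AlgebraicClosure ℚ)⟯ :=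
    IntermediateField.adjoin.finiteDimensional
      ((AlgebraicClosure.isAlgebraic ℚ).isAlgebraic ((m : ℕ) : AlgebraicClosure ℚ)).isIntegral
  letI : NumberField ℚ⟮((m : ℕ) : AlgebraicClosure ℚ)⟯ := ⟨⟩
  rw [h]
  exact weilHeight_natCast_le _ m hm

section Iter
variable {A : Type*} [CommRing A]

lemma iter_formula (Φ : A × A × A → A × A × A)
    (hΦ : ∀ x y z : A, Φ (x, y, z) = (y * z, x * z, z + 1))
    (c : A × A × A) (hc : c = (0, 1, 1)) (n : ℕ) :
    Φ^[2 * n] c = (0, (((2 * n).factorial : ℕ) : A), ((2 * n + 1 : ℕ) : A)) ∧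
    Φ^[2 * n + 1] c = ((((2 * n + 1).factorial : ℕ) : A), 0, ((2 * n + 2 : ℕ) : A)) := by
  induction n with
  | zero =>
    constructor
    · simp [hc, Nat.factorial]
    · simp only [Nat.mul_zero, Nat.zero_add, Function.iterate_one, hc, hΦ, Nat.factorial]
      norm_num
  | succ n ih =>
    have he : 2 * (n + 1) = (2 * n + 1) + 1 := by ring
    have h1 : Φ^[2 * (n + 1)] c
        = (0, (((2 * (n + 1)).factorial : ℕ) : A), ((2 * (n + 1) + 1 : ℕ) : A)) := by
      rw [he, Function.iterate_succ_apply', ih.2, hΦ]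
      refine Prod.ext (by simp) (Prod.ext ?_ ?_)
      · have hfac : (2 * (n + 1)).factorial = (2 * n + 1).factorial * (2 * n + 2) := by
          rw [show 2 * (n + 1) = (2 * n + 1) + 1 from by ring, Nat.factorial_succ]; ring
        show (((2 * n + 1).factorial : ℕ) : A) * ((2 * n + 2 : ℕ) : A)
            = (((2 * (n + 1)).factorial : ℕ) : A)
        rw [hfac]; push_cast; ring
      · show ((2 * n + 2 : ℕ) : A) + 1 = ((2 * (n + 1) + 1 : ℕ) : A)
        push_cast; ring
    refine ⟨h1, ?_⟩
    rw [Function.iterate_succ_apply', h1, hΦ]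
    refine Prod.ext ?_ (Prod.ext (by simp) ?_)
    · have hfac : (2 * (n + 1) + 1).factorial = (2 * (n + 1)).factorial * (2 * (n + 1) + 1) := by
        rw [Nat.factorial_succ]; ring
      show (((2 * (n + 1)).factorial : ℕ) : A) * ((2 * (n + 1) + 1 : ℕ) : A)
          = (((2 * (n + 1) + 1).factorial : ℕ) : A)
      rw [hfac]; push_cast; ring
    · show ((2 * (n + 1) + 1 : ℕ) : A) + 1 = ((2 * (n + 1) + 2 : ℕ) : A)
      push_cast; ring
end Iter

lemma tendsto_div_log : Filter.Tendsto (fun x : ℝ => x / Real.log x) atTop atTop := by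
  have h0 : Filter.Tendsto (fun x : ℝ => Real.log x / x) atTop (nhds 0) := by
    simpa using Real.isLittleO_log_id_atTop.tendsto_div_nhds_zero
  have h1 : ∀ᶠ x : ℝ in atTop, Real.log x / x ∈ Set.Ioi (0 : ℝ) := by
    filter_upwards [Filter.eventually_ge_atTop (2 : ℝ)] with x hx
    exact div_pos (Real.log_pos (by linarith)) (by linarith)
  have h2 : Filter.Tendsto (fun x : ℝ => Real.log x / x) atTop (nhdsWithin 0 (Set.Ioi 0)) :=
    tendsto_nhdsWithin_of_tendsto_nhds_of_eventually_within _ h0 h1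
  have h3 := h2.inv_tendsto_nhdsGT_zero
  have heq : (fun x : ℝ => Real.log x / x)⁻¹ = fun x : ℝ => x / Real.log x := by
    funext x; simp [Pi.inv_apply, inv_div]
  rwa [heq] at h3

/-- for `Φ(x,y,z) = (yz, xz, z+1)` on `𝔸³`, `c = (0,1,1)` and
`f(x,y,z) = x + 1`, one has `f(Φ^{2n}(c)) = 1` and `f(Φ^{2n+1}(c)) = (2n+1)! + 1`, and
consequently `liminf h(f(Φⁿ(c)))/log n = 0` while `limsup h(f(Φⁿ(c)))/log n = ∞`. -/
theorem liminf_zero_limsup_infinite_example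
    (Φ : (AlgebraicClosure ℚ) × (AlgebraicClosure ℚ) × (AlgebraicClosure ℚ) →
         (AlgebraicClosure ℚ) × (AlgebraicClosure ℚ) × (AlgebraicClosure ℚ))
    (hΦ : ∀ x y z : AlgebraicClosure ℚ, Φ (x, y, z) = (y * z, x * z, z + 1))
    (c : (AlgebraicClosure ℚ) × (AlgebraicClosure ℚ) × (AlgebraicClosure ℚ))
    (hc : c = (0, 1, 1))
    (f : (AlgebraicClosure ℚ) × (AlgebraicClosure ℚ) × (AlgebraicClosure ℚ) →
         AlgebraicClosure ℚ)
    (hf : ∀ x y z : AlgebraicClosure ℚ, f (x, y, z) = x + 1) :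
    (∀ n : ℕ, f (Φ^[2 * n] c) = 1 ∧
      f (Φ^[2 * n + 1] c) = (((2 * n + 1).factorial : AlgebraicClosure ℚ) + 1)) ∧
    liminf (fun n : ℕ => ((absHeight (f (Φ^[n] c)) / Real.log n : ℝ) : EReal)) atTop = 0 ∧
    limsup (fun n : ℕ => ((absHeight (f (Φ^[n] c)) / Real.log n : ℝ) : EReal)) atTop = ⊤ := by
  have key := fun n => iter_formula Φ hΦ c hc n
  have heven : ∀ n : ℕ, f (Φ^[2 * n] c) = 1 := by
    intro n; rw [(key n).1, hf]; ring
  have hodd : ∀ n : ℕ, f (Φ^[2 * n + 1] c)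
      = (((2 * n + 1).factorial : ℕ) : AlgebraicClosure ℚ) + 1 := by
    intro n; rw [(key n).2, hf]
  have hfval : ∀ k : ℕ, f (Φ^[2 * k + 1] c)
      = ((((2 * k + 1).factorial + 1 : ℕ)) : AlgebraicClosure ℚ) := by
    intro k; rw [hodd k]; push_cast; ring
  set g : ℕ → EReal :=
    fun n : ℕ => ((absHeight (f (Φ^[n] c)) / Real.log n : ℝ) : EReal) with hg
  have hG0 : ∀ n : ℕ, g (2 * n) = 0 := by
    intro n
    have : absHeight (f (Φ^[2 * n] c)) = 0 := by rw [heven n, absHeight_one]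
    simp [hg, this]
  have hGnonneg : ∀ n : ℕ, (0 : EReal) ≤ g n := by
    intro n
    have h : (0 : ℝ) ≤ absHeight (f (Φ^[n] c)) / Real.log n :=
      div_nonneg (absHeight_nonneg _) (log_nat_nonneg n)
    rw [hg]
    exact EReal.coe_nonneg.2 h
  refine ⟨fun n => ⟨heven n, hodd n⟩, ?_, ?_⟩
  · apply le_antisymm
    · apply Filter.liminf_le_of_frequently_le'
      rw [Filter.frequently_atTop]
      intro N
      exact ⟨2 * N, by omega, le_of_eq (hG0 N)⟩
    · exact Filter.le_liminf_of_le (by isBoundedDefault)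
        (Filter.Eventually.of_forall hGnonneg)
  · rw [EReal.eq_top_iff_forall_lt]
    intro y
    -- the lower bound function tends to infinity
    have hlog2 : (0 : ℝ) < Real.log 2 := Real.log_pos (by norm_num)
    have hT : Filter.Tendsto
        (fun k : ℕ => (Real.log 2 / 2) * (((2 * k + 1 : ℕ) : ℝ) / Real.log ((2 * k + 1 : ℕ) : ℝ)))
        atTop atTop := by
      apply Filter.Tendsto.const_mul_atTop (by positivity : (0:ℝ) < Real.log 2 / 2)
      have hnat : Filter.Tendsto (fun k : ℕ => ((2 * k + 1 : ℕ) : ℝ)) atTop atTop := by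
        apply tendsto_atTop_mono (fun k => ?_) tendsto_natCast_atTop_atTop
        push_cast
        linarith [Nat.cast_nonneg (α := ℝ) k]
      exact tendsto_div_log.comp hnat
    have hlow : ∀ k : ℕ, 1 ≤ k →
        (Real.log 2 / 2) * (((2 * k + 1 : ℕ) : ℝ) / Real.log ((2 * k + 1 : ℕ) : ℝ))
          ≤ absHeight (f (Φ^[2 * k + 1] c)) / Real.log ((2 * k + 1 : ℕ) : ℝ) := by
      intro k hk
      set m : ℕ := (2 * k + 1).factorial + 1 with hm
      have hlogn : (0 : ℝ) < Real.log ((2 * k + 1 : ℕ) : ℝ) := by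
        apply Real.log_pos
        have : (3 : ℕ) ≤ 2 * k + 1 := by omega
        exact_mod_cast Nat.lt_of_lt_of_le (by norm_num) this
      have hh : Real.log m ≤ absHeight (f (Φ^[2 * k + 1] c)) := by
        rw [hfval k]
        exact absHeight_natCast_le m (hm ▸ Nat.le_add_left 1 _)
      have h2n : (2 : ℕ) ^ (2 * k) ≤ (2 * k + 1).factorial := by
        have h := Nat.factorial_mul_pow_le_factorial (m := 1) (n := 2 * k)
        rw [show 2 * k + 1 = 1 + 2 * k from by ring]
        simpa using h
      have hlm : (2 * (k : ℝ)) * Real.log 2 ≤ Real.log m := by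
        have h1 : ((2 : ℝ) ^ (2 * k)) ≤ (m : ℝ) := by
          have : (2 : ℕ) ^ (2 * k) ≤ m := le_trans h2n (Nat.le_succ _)
          exact_mod_cast this
        have h2 := Real.log_le_log (by positivity) h1
        rw [Real.log_pow] at h2
        rw [hm] at h2 ⊢
        push_cast at h2 ⊢
        linarith
      have hk' : (1 : ℝ) ≤ (k : ℝ) := by exact_mod_cast hk
      have hnum : (Real.log 2 / 2) * ((2 * k + 1 : ℕ) : ℝ) ≤ Real.log m := by
        have hstep : (Real.log 2 / 2) * ((2 * k + 1 : ℕ) : ℝ) ≤ 2 * (k : ℝ) * Real.log 2 := by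
          push_cast
          nlinarith
        linarith
      calc (Real.log 2 / 2) * (((2 * k + 1 : ℕ) : ℝ) / Real.log ((2 * k + 1 : ℕ) : ℝ))
          = ((Real.log 2 / 2) * ((2 * k + 1 : ℕ) : ℝ)) / Real.log ((2 * k + 1 : ℕ) : ℝ) := by
            ring
        _ ≤ absHeight (f (Φ^[2 * k + 1] c)) / Real.log ((2 * k + 1 : ℕ) : ℝ) :=
            (div_le_div_iff_of_pos_right hlogn).2 (hnum.trans hh)
    -- conclude the limsup bound
    have hTend : Filter.Tendsto
        (fun k : ℕ => absHeight (f (Φ^[2 * k + 1] c)) / Real.log ((2 * k + 1 : ℕ) : ℝ))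
        atTop atTop := by
      apply Filter.tendsto_atTop_mono' atTop ?_ hT
      filter_upwards [Filter.eventually_ge_atTop 1] with k hk
      exact hlow k hk
    obtain ⟨K, hK⟩ := Filter.eventually_atTop.1 (hTend.eventually_ge_atTop (y + 1))
    have h4 : ((y + 1 : ℝ) : EReal) ≤ limsup g atTop := by
      apply Filter.le_limsup_of_frequently_le'
      rw [Filter.frequently_atTop]
      intro N
      refine ⟨2 * (max K N) + 1, by omega, ?_⟩
      have h5 := hK (max K N) (le_max_left _ _)
      rw [hg]
      exact EReal.coe_le_coe_iff.2 h5
    exact lt_of_lt_of_le (EReal.coe_lt_coe_iff.2 (by linarith)) h4
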